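/- arXiv:1401.2681 — 6 statements merged into one kernel-verified Lean document; each statement's English description precedes it below -/
import Mathlib

section
/- Let M be a 2-level poset whose comparability graph is connected, locally 1-arc-transitive and locally 2-arc-transitive, with X = Min(M) and Y = Max(M). Then for all x, x' ∈ X and y, y' ∈ Y with x < y and x' < y', the intervals [x,y]^{M^D} and [x',y']^{M^D} in the Dedekind–MacNeille completion M^D of M are order-isomorphic. -/
set_option autoImplicit false

section Preamble

/-- A *cut* of a poset `M`: a nonempty subset, bounded above, which equals the set of
lower bounds of its set of upper bounds. -/
def IsCut {M : Type*} [PartialOrder M] (J : Set M) : Prop :=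
  J.Nonempty ∧ (upperBounds J).Nonempty ∧ lowerBounds (upperBounds J) = J

/-- The Dedekind–MacNeille completion of `M`: the set of cuts, ordered by inclusion. -/
abbrev DMC (M : Type*) [PartialOrder M] : Type _ := {J : Set M // IsCut J}

/-- The canonical embedding of `M` into `DMC M`, `a ↦ {x | x ≤ a}`. -/
def principalCut {M : Type*} [PartialOrder M] (a : M) : DMC M :=
  ⟨Set.Iic a, ⟨a, le_refl a⟩, ⟨a, fun _ hx => hx⟩, by
    apply Set.Subset.antisymm
    · intro x hx
      exact hx (fun _ hy => hy)
    · exact subset_lowerBounds_upperBounds _⟩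

/-- The image of `M` in its Dedekind–MacNeille completion (the principal cuts). -/
def principalSet (M : Type*) [PartialOrder M] : Set (DMC M) :=
  Set.range (fun a : M => principalCut a)

/-- A 2-level poset: every element is minimal or maximal. -/
def IsTwoLevel (M : Type*) [PartialOrder M] : Prop :=
  ∀ x : M, IsMin x ∨ IsMax x

/-- The set `Min(M)` of minimal elements. -/
def minSet (M : Type*) [PartialOrder M] : Set M := {x | IsMin x}

/-- The set `Max(M)` of maximal elements. -/
def maxSet (M : Type*) [PartialOrder M] : Set M := {x | IsMax x}

/-- The comparability graph of a poset: `x` adjacent to `y` iff `x < y` or `y < x`. -/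
def compGraph (M : Type*) [PartialOrder M] : SimpleGraph M where
  Adj x y := x < y ∨ y < x
  symm := ⟨fun _ _ h => Or.symm h⟩
  loopless := ⟨fun x h => by rcases h with h | h <;> exact lt_irrefl x h⟩

/-- Upward ramification points of `M`: infima in `DMC M` of two incomparable elements of `M`. -/
def upRam (M : Type*) [PartialOrder M] : Set (DMC M) :=
  {p | ∃ a b : M, ¬ a ≤ b ∧ ¬ b ≤ a ∧ IsGLB {principalCut a, principalCut b} p}

/-- Downward ramification points of `M`: suprema in `DMC M` of two incomparable elements of `M`. -/
def downRam (M : Type*) [PartialOrder M] : Set (DMC M) :=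
  {p | ∃ a b : M, ¬ a ≤ b ∧ ¬ b ≤ a ∧ IsLUB {principalCut a, principalCut b} p}

/-- `M⁺ = M ∪ Ram(M)`, as a subset of `DMC M`. -/
def MPlus (M : Type*) [PartialOrder M] : Set (DMC M) :=
  principalSet M ∪ upRam M ∪ downRam M

/-- A 2-arc in a graph. -/
def IsTwoArc {V : Type*} (G : SimpleGraph V) (v₀ v₁ v₂ : V) : Prop :=
  G.Adj v₀ v₁ ∧ G.Adj v₁ v₂ ∧ v₀ ≠ v₂

/-- Local 1-arc-transitivity: every vertex stabilizer is transitive on neighbours. -/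
def LocallyOneArcTransitive {V : Type*} (G : SimpleGraph V) : Prop :=
  ∀ v u w : V, G.Adj v u → G.Adj v w → ∃ g : G ≃g G, g v = v ∧ g u = w

/-- Local 2-arc-transitivity: every vertex stabilizer is transitive on 2-arcs from that vertex. -/
def LocallyTwoArcTransitive {V : Type*} (G : SimpleGraph V) : Prop :=
  ∀ v u₁ w₁ u₂ w₂ : V, IsTwoArc G v u₁ w₁ → IsTwoArc G v u₂ w₂ →
    ∃ g : G ≃g G, g v = v ∧ g u₁ = u₂ ∧ g w₁ = w₂

/-- (Global) 1-arc-transitivity of a graph. -/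
def OneArcTransitive {V : Type*} (G : SimpleGraph V) : Prop :=
  ∀ v₀ v₁ u₀ u₁ : V, G.Adj v₀ v₁ → G.Adj u₀ u₁ →
    ∃ g : G ≃g G, g v₀ = u₀ ∧ g v₁ = u₁

/-- (Global) 2-arc-transitivity of a graph. -/
def TwoArcTransitive {V : Type*} (G : SimpleGraph V) : Prop :=
  ∀ v₀ v₁ v₂ u₀ u₁ u₂ : V, IsTwoArc G v₀ v₁ v₂ → IsTwoArc G u₀ u₁ u₂ →
    ∃ g : G ≃g G, g v₀ = u₀ ∧ g v₁ = u₁ ∧ g v₂ = u₂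

/-- 3-CS-homogeneity: every isomorphism between connected 3-element induced subposets
extends to an automorphism. -/
def ThreeCSHomogeneous (M : Type*) [PartialOrder M] : Prop :=
  ∀ A B : Set M, A.ncard = 3 → B.ncard = 3 →
    ((compGraph M).induce A).Connected → ((compGraph M).induce B).Connected →
    ∀ f : ↥A ≃o ↥B, ∃ g : M ≃o M, ∀ a : ↥A, g ↑a = ↑(f a)

/-- 2-CS-transitivity: the automorphism group is transitive on comparable pairs. -/
def TwoCSTransitive (M : Type*) [PartialOrder M] : Prop :=
  ∀ a b a' b' : M, a < b → a' < b' → ∃ g : M ≃o M, g a = a' ∧ g b = b'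

/-- 3-CS-transitivity: for any two isomorphic connected 3-element induced subposets there
is an automorphism carrying one onto the other. -/
def ThreeCSTransitive (M : Type*) [PartialOrder M] : Prop :=
  ∀ A B : Set M, A.ncard = 3 → B.ncard = 3 →
    ((compGraph M).induce A).Connected → ((compGraph M).induce B).Connected →
    Nonempty (↥A ≃o ↥B) → ∃ g : M ≃o M, ⇑g '' A = B

/-- A subset of a poset is a `k`-diamond if it consists of a least element, a greatest
element, and exactly `k` pairwise incomparable elements strictly in between. -/
def IsKDiamond {P : Type*} [PartialOrder P] (s : Set P) (k : ℕ) : Prop :=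
  ∃ a b : P, a ∈ s ∧ b ∈ s ∧ a ≠ b ∧ (∀ z ∈ s, a ≤ z ∧ z ≤ b) ∧
    (s \ {a, b}).ncard = k ∧
    ∀ z ∈ s \ ({a, b} : Set P), ∀ w ∈ s \ ({a, b} : Set P), z ≠ w → ¬ z ≤ w

end Preamble

section Aux
variable {M : Type*} [PartialOrder M]

lemma isCut_image (e : M ≃o M) {J : Set M} (h : IsCut J) : IsCut (⇑e '' J) := by
  refine ⟨h.1.image e, ?_, ?_⟩
  · rw [e.upperBounds_image]
    exact h.2.1.image e
  · rw [e.upperBounds_image, e.lowerBounds_image, h.2.2]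

def cutImage (e : M ≃o M) : DMC M → DMC M := fun J => ⟨⇑e '' J.1, isCut_image e J.2⟩

def dmcIso (e : M ≃o M) : DMC M ≃o DMC M where
  toFun := cutImage e
  invFun := cutImage e.symm
  left_inv J := Subtype.ext (by simp [cutImage, Set.image_image])
  right_inv J := Subtype.ext (by simp [cutImage, Set.image_image])
  map_rel_iff' {J K} := by
    show ⇑e '' J.1 ⊆ ⇑e '' K.1 ↔ J.1 ⊆ K.1
    exact Set.image_subset_image_iff e.injective

lemma dmcIso_principal (e : M ≃o M) (a : M) :
    dmcIso e (principalCut a) = principalCut (e a) :=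
  Subtype.ext (e.image_Iic a)

def iccIso {α : Type*} [Preorder α] (E : α ≃o α) {a b a' b' : α}
    (ha : E a = a') (hb : E b = b') :
    ↥(Set.Icc a b) ≃o ↥(Set.Icc a' b') where
  toFun z := ⟨E z.1, by
    constructor
    · rw [← ha]; exact E.monotone z.2.1
    · rw [← hb]; exact E.monotone z.2.2⟩
  invFun z := ⟨E.symm z.1, by
    constructor
    · rw [← E.symm_apply_apply a, ha]; exact E.symm.monotone z.2.1
    · rw [← E.symm_apply_apply b, hb]; exact E.symm.monotone z.2.2⟩
  left_inv z := Subtype.ext (E.symm_apply_apply z.1)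
  right_inv z := Subtype.ext (E.apply_symm_apply z.1)
  map_rel_iff' {z w} := by
    show E z.1 ≤ E w.1 ↔ z.1 ≤ w.1
    exact E.le_iff_le

end Aux

/-- In a connected, locally 1- and 2-arc-transitive 2-level poset, all
intervals `[x,y]` (for `x ∈ Min(M)`, `y ∈ Max(M)`, `x < y`) of the Dedekind–MacNeille
completion are order-isomorphic. -/
theorem intervals_iso_of_locally_arc_transitive (M : Type*) [PartialOrder M]
    (h2lev : IsTwoLevel M)
    (hconn : (compGraph M).Connected)
    (h1arc : LocallyOneArcTransitive (compGraph M))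
    (h2arc : LocallyTwoArcTransitive (compGraph M)) :
    ∀ x x' y y' : M, x ∈ minSet M → x' ∈ minSet M → y ∈ maxSet M → y' ∈ maxSet M →
      x < y → x' < y' →
      Nonempty (↥(Set.Icc (principalCut x) (principalCut y)) ≃o
        ↥(Set.Icc (principalCut x') (principalCut y'))) := by
  intro x x' y y' hxm hx'm _hym _hy'm hxy hx'y'
  have min_of_lt : ∀ {a b : M}, a < b → IsMin a := fun {a b} h =>
    (h2lev a).resolve_right (fun hm => h.not_ge (hm h.le))
  have notmin_of_lt : ∀ {a b : M}, a < b → ¬ IsMin b := fun {a b} h hm => h.not_ge (hm h.le)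
  have opp : ∀ {v w : M}, (compGraph M).Adj v w → (IsMin v ↔ ¬ IsMin w) := by
    intro v w h
    rcases h with h | h
    · exact iff_of_true (min_of_lt h) (notmin_of_lt h)
    · exact iff_of_false (notmin_of_lt h) (not_not_intro (min_of_lt h))
  have adjlt : ∀ {v w : M}, (compGraph M).Adj v w → IsMin v → v < w := by
    intro v w h hv
    rcases h with h | h
    · exact h
    · exact absurd hv (notmin_of_lt h)
  -- side propagation along walks
  have lemL : ∀ (f : (compGraph M) ≃g (compGraph M)) (a b : M), (compGraph M).Walk a b →
      (IsMin (f a) ↔ IsMin a) → (IsMin (f b) ↔ IsMin b) := by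
    intro f a b p
    induction p with
    | nil => exact id
    | @cons u c b h q ih =>
      intro hu
      apply ih
      have h' : (compGraph M).Adj (f u) (f c) := f.map_rel_iff.mpr h
      have h1 := opp h'
      have h2 := opp h
      tauto
  have hSP : ∀ (f : (compGraph M) ≃g (compGraph M)) (a : M),
      (IsMin (f a) ↔ IsMin a) → ∀ v, IsMin (f v) ↔ IsMin v := by
    intro f a ha v
    obtain ⟨p⟩ := hconn a v
    exact lemL f a v p ha
  -- main claim by walk induction
  have claimC : ∀ a b : M, (compGraph M).Walk a b →
      ∃ g : (compGraph M) ≃g (compGraph M),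
        (∀ v, IsMin (g v) ↔ IsMin v) ∧
        (g a = b ∨ ∃ c, (compGraph M).Adj b c ∧ g a = c) := by
    intro a b p
    induction p with
    | nil => exact ⟨RelIso.refl _, fun v => Iff.rfl, Or.inl rfl⟩
    | @cons a c b h q ih =>
      obtain ⟨g, hg, hgc⟩ := ih
      rcases hgc with hgb | ⟨d, hbd, hgd⟩
      · refine ⟨g, hg, Or.inr ⟨g a, ?_, rfl⟩⟩
        rw [← hgb]
        exact (g.map_adj_iff.mpr h).symm
      · have hadj : (compGraph M).Adj d (g a) := by
          rw [← hgd]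
          exact (g.map_adj_iff.mpr h).symm
        by_cases hba : g a = b
        · exact ⟨g, hg, Or.inl hba⟩
        · obtain ⟨h1, hfix, hmove⟩ := h1arc d (g a) b hadj hbd.symm
          have hSP1 : ∀ v, IsMin (h1 v) ↔ IsMin v := hSP h1 d (by rw [hfix])
          refine ⟨g.trans h1, fun v => ?_, Or.inl ?_⟩
          · exact (hSP1 (g v)).trans (hg v)
          · exact hmove
  -- get an automorphism sending x to x'
  obtain ⟨p⟩ := hconn x x'
  obtain ⟨g, hSPg, hcase⟩ := claimC x x' p
  have hgx : g x = x' := by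
    rcases hcase with h | ⟨c, hadj, hgc⟩
    · exact h
    · exfalso
      have hcmin : IsMin c := by
        rw [← hgc]
        exact (hSPg x).mpr hxm
      exact ((opp hadj).mp hx'm) hcmin
  -- move g y to y'
  have hadj' : (compGraph M).Adj x' (g y) := by
    rw [← hgx]
    exact g.map_adj_iff.mpr (Or.inl hxy)
  obtain ⟨h1, hfix, hmove⟩ := h1arc x' (g y) y' hadj' (Or.inl hx'y')
  have hSP1 : ∀ v, IsMin (h1 v) ↔ IsMin v := hSP h1 x' (by rw [hfix])
  set f := g.trans h1 with hf
  have hSPf : ∀ v, IsMin (f v) ↔ IsMin v := fun v => (hSP1 (g v)).trans (hSPg v)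
  have hfx : f x = x' := by
    show h1 (g x) = x'
    rw [hgx, hfix]
  have hfy : f y = y' := hmove
  -- f is an order isomorphism
  have hf_lt : ∀ {a b : M}, a < b → f a < f b := by
    intro a b h
    exact adjlt (f.map_rel_iff.mpr (Or.inl h)) ((hSPf a).mpr (min_of_lt h))
  let e : M ≃o M :=
    { toEquiv := f.toEquiv
      map_rel_iff' := by
        intro a b
        constructor
        · intro h
          rcases h.lt_or_eq with h | h
          · have hmin : IsMin a := (hSPf a).mp (min_of_lt h)
            exact (adjlt (f.map_rel_iff.mp (Or.inl h)) hmin).le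
          · exact (f.toEquiv.injective h).le
        · intro h
          rcases h.lt_or_eq with h | h
          · exact (hf_lt h).le
          · exact (congrArg _ h).le }
  have hex : e x = x' := hfx
  have hey : e y = y' := hfy
  exact ⟨iccIso (dmcIso e)
    (by rw [dmcIso_principal, hex]) (by rw [dmcIso_principal, hey])⟩
end

section
/- Let M be a 2-level poset whose comparability graph is connected, locally 1-arc-transitive and locally 2-arc-transitive. Every automorphism of M extends canonically to an automorphism of M^D (acting on cuts by taking images); under this action, Aut(M) acts transitively on the set ↓Ram(M) of downward ramification points of M and transitively on the set ↑Ram(M) of upward ramification points of M. -/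
set_option autoImplicit false

section Aux

open SimpleGraph

variable {M : Type*} [PartialOrder M]

lemma myLbUbLb (S : Set M) :
    lowerBounds (upperBounds (lowerBounds S)) = lowerBounds S :=
  Set.Subset.antisymm (lowerBounds_mono_set (subset_upperBounds_lowerBounds S))
    (fun _ hl _ hu => hu hl)

lemma myCompAdj {x y : M} : (compGraph M).Adj x y ↔ x < y ∨ y < x := Iff.rfl

lemma myDMCle {p q : DMC M} : p ≤ q ↔ p.val ⊆ q.val := Iff.rfl

lemma myIsMinOfLt (h2lev : IsTwoLevel M) {x y : M} (h : x < y) : IsMin x := by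
  rcases h2lev x with hm | hm
  · exact hm
  · exact absurd (hm h.le) h.not_ge

lemma myIsMaxOfLt (h2lev : IsTwoLevel M) {x y : M} (h : x < y) : IsMax y := by
  rcases h2lev y with hm | hm
  · exact absurd (hm h.le) h.not_ge
  · exact hm

lemma myAdjCases (h2lev : IsTwoLevel M) {x y : M} (h : (compGraph M).Adj x y) :
    (IsMin x ∧ IsMax y ∧ x < y) ∨ (IsMin y ∧ IsMax x ∧ y < x) := by
  rcases myCompAdj.mp h with h | h
  · exact Or.inl ⟨myIsMinOfLt h2lev h, myIsMaxOfLt h2lev h, h⟩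
  · exact Or.inr ⟨myIsMinOfLt h2lev h, myIsMaxOfLt h2lev h, h⟩

lemma myMinNotMax {x y : M} (h : (compGraph M).Adj x y) (hmin : IsMin x) : ¬ IsMax x := by
  intro hmax
  rcases myCompAdj.mp h with h | h
  · exact h.not_ge (hmax h.le)
  · exact h.not_ge (hmin h.le)

lemma myStepQ (h2lev : IsTwoLevel M) (φ : compGraph M ≃g compGraph M)
    {x y : M} (hxy : (compGraph M).Adj x y)
    (hx : (IsMin x ∧ IsMin (φ x)) ∨ (IsMax x ∧ IsMax (φ x))) :
    (IsMin y ∧ IsMin (φ y)) ∨ (IsMax y ∧ IsMax (φ y)) := by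
  have hadj : (compGraph M).Adj (φ x) (φ y) := φ.map_rel_iff.mpr hxy
  rcases myAdjCases h2lev hxy with ⟨hminx, hmaxy, hlt⟩ | ⟨hminy, hmaxx, hlt⟩
  · have hφx : IsMin (φ x) := by
      rcases hx with hx | hx
      · exact hx.2
      · exact absurd (hx.1 hlt.le) hlt.not_ge
    rcases myAdjCases h2lev hadj with ⟨_, h2, _⟩ | ⟨_, _, h3⟩
    · exact Or.inr ⟨hmaxy, h2⟩
    · exact absurd (hφx h3.le) h3.not_ge
  · have hφx : IsMax (φ x) := by
      rcases hx with hx | hx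
      · exact absurd (hx.1 hlt.le) hlt.not_ge
      · exact hx.2
    rcases myAdjCases h2lev hadj with ⟨_, _, h3⟩ | ⟨h2, _, _⟩
    · exact absurd (hφx h3.le) h3.not_ge
    · exact Or.inl ⟨hminy, h2⟩

lemma myWalkQ (h2lev : IsTwoLevel M) (φ : compGraph M ≃g compGraph M) :
    ∀ {x y : M}, (compGraph M).Walk x y →
    ((IsMin x ∧ IsMin (φ x)) ∨ (IsMax x ∧ IsMax (φ x))) →
    ((IsMin y ∧ IsMin (φ y)) ∨ (IsMax y ∧ IsMax (φ y))) := by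
  intro x y p
  induction p with
  | nil => exact id
  | cons h p ih => exact fun hx => ih (myStepQ h2lev φ h hx)

lemma myMonoOfSeed (h2lev : IsTwoLevel M) (hconn : (compGraph M).Connected)
    (φ : compGraph M ≃g compGraph M) {v : M}
    (hv : (IsMin v ∧ IsMin (φ v)) ∨ (IsMax v ∧ IsMax (φ v))) :
    Monotone ⇑φ := by
  intro x y hxy
  rcases eq_or_lt_of_le hxy with rfl | hlt
  · exact le_refl _
  · have hQ : (IsMin x ∧ IsMin (φ x)) ∨ (IsMax x ∧ IsMax (φ x)) := by
      obtain ⟨p⟩ := hconn.preconnected v x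
      exact myWalkQ h2lev φ p hv
    have hφx : IsMin (φ x) := by
      rcases hQ with h | h
      · exact h.2
      · exact absurd (h.1 hlt.le) hlt.not_ge
    have hadj : (compGraph M).Adj (φ x) (φ y) := φ.map_rel_iff.mpr (myCompAdj.mpr (Or.inl hlt))
    rcases myCompAdj.mp hadj with h | h
    · exact h.le
    · exact absurd (hφx h.le) h.not_ge

lemma myOrderIsoOfGraphAuto (h2lev : IsTwoLevel M) (hconn : (compGraph M).Connected)
    (φ : compGraph M ≃g compGraph M) {v : M}
    (hv : (IsMin v ∧ IsMin (φ v)) ∨ (IsMax v ∧ IsMax (φ v))) :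
    ∃ g : M ≃o M, ∀ x, g x = φ x := by
  have hv' : (IsMin (φ v) ∧ IsMin (φ.symm (φ v))) ∨ (IsMax (φ v) ∧ IsMax (φ.symm (φ v))) := by
    rcases hv with ⟨h1, h2⟩ | ⟨h1, h2⟩
    · exact Or.inl ⟨h2, by rwa [RelIso.symm_apply_apply]⟩
    · exact Or.inr ⟨h2, by rwa [RelIso.symm_apply_apply]⟩
  have m1 := myMonoOfSeed h2lev hconn φ hv
  have m2 := myMonoOfSeed h2lev hconn φ.symm hv'
  refine ⟨⟨φ.toEquiv, ?_⟩, fun x => rfl⟩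
  intro a b
  constructor
  · intro h
    simpa using m2 h
  · exact fun h => m1 h

lemma myWalkParity (h2lev : IsTwoLevel M) (hne : ∀ x : M, ∃ y, (compGraph M).Adj x y) :
    ∀ {x y : M} (p : (compGraph M).Walk x y), Even p.length ↔ (IsMin x ↔ IsMin y) := by
  intro x y p
  induction p with
  | nil => simp
  | @cons x b y h p ih =>
    have hedge : IsMin x ↔ ¬ IsMin b := by
      rcases myAdjCases h2lev h with ⟨hminx, hmaxb, _⟩ | ⟨hminb, hmaxx, _⟩
      · exact iff_of_true hminx (fun hmb => myMinNotMax h.symm hmb hmaxb)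
      · exact iff_of_false (fun hmx => myMinNotMax h hmx hmaxx) (not_not.mpr hminb)
    rw [SimpleGraph.Walk.length_cons, Nat.even_add_one, ih]
    tauto

lemma myWalkAuto (h1arc : LocallyOneArcTransitive (compGraph M)) :
    ∀ {v w : M} (p : (compGraph M).Walk v w),
      (Even p.length → ∃ φ : compGraph M ≃g compGraph M, φ v = w) ∧
      (¬ Even p.length → ∃ φ : compGraph M ≃g compGraph M, (compGraph M).Adj (φ v) w) := by
  intro v w p
  induction p with
  | nil =>
    refine ⟨fun _ => ⟨RelIso.refl _, rfl⟩, fun h => absurd ?_ h⟩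
    simp
  | @cons v x w h p ih =>
    constructor
    · intro heven
      rw [SimpleGraph.Walk.length_cons, Nat.even_add_one] at heven
      obtain ⟨φ, hφ⟩ := ih.2 heven
      have hadj : (compGraph M).Adj (φ v) (φ x) := φ.map_rel_iff.mpr h
      by_cases hc : φ v = w
      · exact ⟨φ, hc⟩
      · obtain ⟨ψ, _, hψ2⟩ := h1arc (φ x) (φ v) w hadj.symm hφ
        exact ⟨φ.trans ψ, hψ2⟩
    · intro hodd
      rw [SimpleGraph.Walk.length_cons, Nat.even_add_one, not_not] at hodd
      obtain ⟨φ, hφ⟩ := ih.1 hodd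
      exact ⟨φ, hφ ▸ φ.map_rel_iff.mpr h⟩

lemma myDownVal (p : DMC M) {a b : M} (hab : ¬ a ≤ b) (hba : ¬ b ≤ a)
    (h : IsLUB {principalCut a, principalCut b} p) :
    p.val = lowerBounds (upperBounds ({a, b} : Set M)) ∧ ∃ u, a < u ∧ b < u := by
  have ha : (principalCut a).val ⊆ p.val := h.1 (Set.mem_insert _ _)
  have hb : (principalCut b).val ⊆ p.val := h.1 (Set.mem_insert_of_mem _ rfl)
  have hap : a ∈ p.val := ha (Set.mem_Iic.mpr le_rfl)
  have hbp : b ∈ p.val := hb (Set.mem_Iic.mpr le_rfl)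
  have hsub : ({a, b} : Set M) ⊆ p.val := by
    rintro x (rfl | rfl)
    exacts [hap, hbp]
  obtain ⟨u0, hu0⟩ := p.2.2.1
  have hU0 : u0 ∈ upperBounds ({a, b} : Set M) := upperBounds_mono_set hsub hu0
  have hau : a < u0 := lt_of_le_of_ne (hU0 (Set.mem_insert _ _))
    (fun e => hba (e ▸ hU0 (Set.mem_insert_of_mem _ rfl)))
  have hbu : b < u0 := lt_of_le_of_ne (hU0 (Set.mem_insert_of_mem _ rfl))
    (fun e => hab (e ▸ hU0 (Set.mem_insert _ _)))
  refine ⟨?_, ⟨u0, hau, hbu⟩⟩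
  have hcutL : IsCut (lowerBounds (upperBounds ({a, b} : Set M))) :=
    ⟨⟨a, fun u hu => hu (Set.mem_insert _ _)⟩, ⟨u0, fun x hx => hx hU0⟩, myLbUbLb _⟩
  have hub : (⟨_, hcutL⟩ : DMC M) ∈ upperBounds {principalCut a, principalCut b} := by
    rintro J (rfl | rfl) <;>
      exact fun x hx u hu => le_trans hx (by
        first
        | exact hu (Set.mem_insert _ _)
        | exact hu (Set.mem_insert_of_mem _ rfl))
  refine Set.Subset.antisymm (myDMCle.mp (h.2 hub)) ?_
  have hmono := lowerBounds_mono_set (upperBounds_mono_set hsub)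
  rw [p.2.2.2] at hmono
  exact hmono

lemma myUpVal (p : DMC M) {a b : M} (hab : ¬ a ≤ b) (hba : ¬ b ≤ a)
    (h : IsGLB {principalCut a, principalCut b} p) :
    p.val = lowerBounds ({a, b} : Set M) ∧ ∃ l, l ∈ p.val ∧ l < a ∧ l < b := by
  have ha : p.val ⊆ (principalCut a).val := h.1 (Set.mem_insert _ _)
  have hb : p.val ⊆ (principalCut b).val := h.1 (Set.mem_insert_of_mem _ rfl)
  have hsub : p.val ⊆ lowerBounds ({a, b} : Set M) := by
    intro x hx
    rintro c (rfl | rfl)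
    · exact Set.mem_Iic.mp (ha hx)
    · exact Set.mem_Iic.mp (hb hx)
  obtain ⟨l, hl⟩ := p.2.1
  have hla : l < a := lt_of_le_of_ne (hsub hl (Set.mem_insert _ _))
    (fun e => hab (e ▸ hsub hl (Set.mem_insert_of_mem _ rfl)))
  have hlb : l < b := lt_of_le_of_ne (hsub hl (Set.mem_insert_of_mem _ rfl))
    (fun e => hba (e ▸ hsub hl (Set.mem_insert _ _)))
  refine ⟨?_, ⟨l, hl, hla, hlb⟩⟩
  have hcutK : IsCut (lowerBounds ({a, b} : Set M)) :=
    ⟨⟨l, hsub hl⟩, ⟨a, fun x hx => hx (Set.mem_insert _ _)⟩, myLbUbLb _⟩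
  have hlbd : (⟨_, hcutK⟩ : DMC M) ∈ lowerBounds {principalCut a, principalCut b} := by
    rintro J (rfl | rfl)
    · exact fun x hx => Set.mem_Iic.mpr (hx (Set.mem_insert _ _))
    · exact fun x hx => Set.mem_Iic.mpr (hx (Set.mem_insert_of_mem _ rfl))
  exact Set.Subset.antisymm hsub (myDMCle.mp (h.2 hlbd))

lemma myImageIsCut (g : M ≃o M) {J : Set M} (h : IsCut J) : IsCut (⇑g '' J) := by
  obtain ⟨hne, ⟨u, hu⟩, hcl⟩ := h
  refine ⟨hne.image _, ⟨g u, ?_⟩, ?_⟩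
  · rw [g.upperBounds_image]; exact Set.mem_image_of_mem _ hu
  · rw [g.upperBounds_image, g.lowerBounds_image, hcl]

end Aux

/-- Every automorphism of a 2-level poset `M` extends canonically (by taking
images of cuts) to an automorphism of its Dedekind–MacNeille completion; if the comparability
graph of `M` is connected, locally 1-arc-transitive and locally 2-arc-transitive, then under
this action `Aut(M)` is transitive on the downward ramification points and on the upward
ramification points. -/
theorem aut_extends_and_transitive_on_ram (M : Type*) [PartialOrder M]
    (h2lev : IsTwoLevel M)
    (hconn : (compGraph M).Connected)
    (h1arc : LocallyOneArcTransitive (compGraph M))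
    (h2arc : LocallyTwoArcTransitive (compGraph M)) :
    (∀ g : M ≃o M, ∃ G : DMC M ≃o DMC M, ∀ J : DMC M, (G J).val = ⇑g '' J.val) ∧
    (∀ p ∈ downRam M, ∀ q ∈ downRam M, ∃ g : M ≃o M, ⇑g '' p.val = q.val) ∧
    (∀ p ∈ upRam M, ∀ q ∈ upRam M, ∃ g : M ≃o M, ⇑g '' p.val = q.val) := by
  classical
  refine ⟨?_, ?_, ?_⟩
  · intro g
    refine ⟨{ toFun := fun J => ⟨⇑g '' J.val, myImageIsCut g J.2⟩
              invFun := fun J => ⟨⇑g.symm '' J.val, myImageIsCut g.symm J.2⟩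
              left_inv := fun J => Subtype.ext (by
                simp [Set.image_image])
              right_inv := fun J => Subtype.ext (by
                simp [Set.image_image])
              map_rel_iff' := ?_ }, fun J => rfl⟩
    intro J K
    constructor
    · intro h
      have h' : ⇑g '' J.val ⊆ ⇑g '' K.val := h
      exact myDMCle.mpr ((Set.image_subset_image_iff g.injective).mp h')
    · intro h
      have h' : J.val ⊆ K.val := myDMCle.mp h
      exact (Set.image_subset_image_iff g.injective).mpr h'
  · rintro p ⟨a, b, hab, hba, hp⟩ q ⟨a', b', hab', hba', hq⟩
    obtain ⟨hpv, u, hau, hbu⟩ := myDownVal p hab hba hp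
    obtain ⟨hqv, u', hau', hbu'⟩ := myDownVal q hab' hba' hq
    have hamin : IsMin a := myIsMinOfLt h2lev hau
    have ha'min : IsMin a' := myIsMinOfLt h2lev hau'
    have hne : ∀ x : M, ∃ y, (compGraph M).Adj x y := by
      intro x
      obtain ⟨w⟩ := hconn.preconnected x a
      cases w with
      | nil => exact ⟨u, myCompAdj.mpr (Or.inl hau)⟩
      | cons h _ => exact ⟨_, h⟩
    obtain ⟨w⟩ := hconn.preconnected a a'
    have heven : Even w.length := (myWalkParity h2lev hne w).mpr (iff_of_true hamin ha'min)
    obtain ⟨φ, hφ⟩ := (myWalkAuto h1arc w).1 heven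
    obtain ⟨g₀, hg₀⟩ := myOrderIsoOfGraphAuto h2lev hconn φ
      (Or.inl ⟨hamin, by rw [hφ]; exact ha'min⟩)
    have e0 : g₀ a = a' := (hg₀ a).trans hφ
    have arc1 : IsTwoArc (compGraph M) a' (g₀ u) (g₀ b) := by
      refine ⟨?_, ?_, ?_⟩
      · rw [← e0]; exact myCompAdj.mpr (Or.inl (g₀.strictMono hau))
      · exact myCompAdj.mpr (Or.inr (g₀.strictMono hbu))
      · rw [← e0]; intro hEq; exact hab (le_of_eq (g₀.injective hEq))
    have arc2 : IsTwoArc (compGraph M) a' u' b' :=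
      ⟨myCompAdj.mpr (Or.inl hau'), myCompAdj.mpr (Or.inr hbu'),
        fun hEq => hab' (le_of_eq hEq)⟩
    obtain ⟨ψ, hψv, hψ1, hψ2⟩ := h2arc a' (g₀ u) (g₀ b) u' b' arc1 arc2
    obtain ⟨h₁, hh₁⟩ := myOrderIsoOfGraphAuto h2lev hconn ψ
      (Or.inl ⟨ha'min, by rw [hψv]; exact ha'min⟩)
    refine ⟨g₀.trans h₁, ?_⟩
    have ea : (g₀.trans h₁) a = a' := by
      show h₁ (g₀ a) = a'
      rw [e0, hh₁, hψv]
    have eb : (g₀.trans h₁) b = b' := by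
      show h₁ (g₀ b) = b'
      rw [hh₁, hψ2]
    rw [hpv, hqv, ← (g₀.trans h₁).lowerBounds_image, ← (g₀.trans h₁).upperBounds_image,
      Set.image_pair, ea, eb]
  · rintro p ⟨a, b, hab, hba, hp⟩ q ⟨a', b', hab', hba', hq⟩
    obtain ⟨hpv, l, hlp, hla, hlb⟩ := myUpVal p hab hba hp
    obtain ⟨hqv, l', hl'q, hla', hlb'⟩ := myUpVal q hab' hba' hq
    have hamax : IsMax a := myIsMaxOfLt h2lev hla
    have ha'max : IsMax a' := myIsMaxOfLt h2lev hla'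
    have hne : ∀ x : M, ∃ y, (compGraph M).Adj x y := by
      intro x
      obtain ⟨w⟩ := hconn.preconnected x a
      cases w with
      | nil => exact ⟨l, myCompAdj.mpr (Or.inr hla)⟩
      | cons h _ => exact ⟨_, h⟩
    obtain ⟨w⟩ := hconn.preconnected a a'
    have hnamin : ¬ IsMin a := fun hmin =>
      (myMinNotMax (myCompAdj.mpr (Or.inr hla)) hmin) hamax
    have hnamin' : ¬ IsMin a' := fun hmin =>
      (myMinNotMax (myCompAdj.mpr (Or.inr hla')) hmin) ha'max
    have heven : Even w.length := (myWalkParity h2lev hne w).mpr (iff_of_false hnamin hnamin')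
    obtain ⟨φ, hφ⟩ := (myWalkAuto h1arc w).1 heven
    obtain ⟨g₀, hg₀⟩ := myOrderIsoOfGraphAuto h2lev hconn φ
      (Or.inr ⟨hamax, by rw [hφ]; exact ha'max⟩)
    have e0 : g₀ a = a' := (hg₀ a).trans hφ
    have arc1 : IsTwoArc (compGraph M) a' (g₀ l) (g₀ b) := by
      refine ⟨?_, ?_, ?_⟩
      · rw [← e0]; exact myCompAdj.mpr (Or.inr (g₀.strictMono hla))
      · exact myCompAdj.mpr (Or.inl (g₀.strictMono hlb))
      · rw [← e0]; intro hEq; exact hab (le_of_eq (g₀.injective hEq))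
    have arc2 : IsTwoArc (compGraph M) a' l' b' :=
      ⟨myCompAdj.mpr (Or.inr hla'), myCompAdj.mpr (Or.inl hlb'),
        fun hEq => hab' (le_of_eq hEq)⟩
    obtain ⟨ψ, hψv, hψ1, hψ2⟩ := h2arc a' (g₀ l) (g₀ b) l' b' arc1 arc2
    obtain ⟨h₁, hh₁⟩ := myOrderIsoOfGraphAuto h2lev hconn ψ
      (Or.inr ⟨ha'max, by rw [hψv]; exact ha'max⟩)
    refine ⟨g₀.trans h₁, ?_⟩
    have ea : (g₀.trans h₁) a = a' := by
      show h₁ (g₀ a) = a'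
      rw [e0, hh₁, hψv]
    have eb : (g₀.trans h₁) b = b' := by
      show h₁ (g₀ b) = b'
      rw [hh₁, hψ2]
    rw [hpv, hqv, ← (g₀.trans h₁).lowerBounds_image, Set.image_pair, ea, eb]
end

section
/- Let M be a poset such that for all a, b ∈ M with a ≤ b the interval [a,b]^{M^+} = {z ∈ M^+ : a ≤ z ≤ b} is a chain. Then for all a, b ∈ M^D with a ≤ b, the interval [a,b]^{M^D} is a chain. -/
set_option autoImplicit false

section Aux

variable {M : Type*} [PartialOrder M]

lemma cut_lowerSet (x : DMC M) : IsLowerSet (x.1 : Set M) := by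
  intro a b hba ha
  have hx := x.2.2.2
  rw [← hx] at ha ⊢
  exact fun c hc => hba.trans (ha hc)

lemma principal_le_iff (x : DMC M) (a : M) : principalCut a ≤ x ↔ a ∈ x.1 := by
  constructor
  · intro h
    exact h (Set.mem_Iic.mpr (le_refl a))
  · intro h b hb
    exact cut_lowerSet x (Set.mem_Iic.mp hb) h

lemma principal_mono {a b : M} (hab : a ≤ b) : principalCut a ≤ principalCut b :=
  fun _ hz => Set.mem_Iic.mpr ((Set.mem_Iic.mp hz).trans hab)

/-- The supremum of two cuts with a common upper bound `m` in `M`. -/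
def supCut (x y : DMC M) (m : M) (hxm : ∀ a ∈ x.1, a ≤ m) (hym : ∀ a ∈ y.1, a ≤ m) :
    DMC M := by
  refine ⟨lowerBounds (upperBounds (x.1 ∪ y.1)), ?_, ?_, ?_⟩
  · obtain ⟨a, ha⟩ := x.2.1
    exact ⟨a, fun c hc => hc (Or.inl ha)⟩
  · refine ⟨m, fun z hz => hz ?_⟩
    rintro a (ha | ha)
    · exact hxm a ha
    · exact hym a ha
  · apply Set.Subset.antisymm
    · intro z hz c hc
      exact hz (fun w hw => hw hc)
    · exact subset_lowerBounds_upperBounds _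

lemma supCut_isLUB (x y : DMC M) (m : M) (hxm : ∀ a ∈ x.1, a ≤ m)
    (hym : ∀ a ∈ y.1, a ≤ m) : IsLUB {x, y} (supCut x y m hxm hym) := by
  constructor
  · intro z hz
    rcases hz with rfl | hz
    · exact fun a ha c hc => hc (Or.inl ha)
    · rw [Set.mem_singleton_iff] at hz
      subst hz
      exact fun a ha c hc => hc (Or.inr ha)
  · intro z hz
    intro w hw
    have hxz : x.1 ⊆ z.1 := hz (Set.mem_insert _ _)
    have hyz : y.1 ⊆ z.1 := hz (Set.mem_insert_of_mem _ rfl)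
    rw [← z.2.2.2]
    intro c hc
    apply hw
    rintro a (ha | ha)
    · exact hc (hxz ha)
    · exact hc (hyz ha)

end Aux

/-- If all intervals of `M⁺` over pairs of elements of `M` are chains, then
all intervals of the Dedekind–MacNeille completion `M^D` are chains. -/
theorem intervals_of_completion_chains (M : Type*) [PartialOrder M]
    (h : ∀ a b : M, a ≤ b →
      IsChain (· ≤ ·) (MPlus M ∩ Set.Icc (principalCut a) (principalCut b))) :
    ∀ a b : DMC M, a ≤ b → IsChain (· ≤ ·) (Set.Icc a b) := by
  intro A B hAB x hx y hy hne
  by_contra hcon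
  push_neg at hcon
  obtain ⟨hxy, hyx⟩ := hcon
  -- pick u ∈ x \ y and v ∈ y \ x
  have hxy' : ¬ x.1 ⊆ y.1 := hxy
  have hyx' : ¬ y.1 ⊆ x.1 := hyx
  obtain ⟨u, hu1, hu2⟩ := Set.not_subset.mp hxy'
  obtain ⟨v, hv1, hv2⟩ := Set.not_subset.mp hyx'
  obtain ⟨n, hn⟩ := A.2.1
  obtain ⟨m, hm⟩ := B.2.2.1
  have hnx : n ∈ x.1 := hx.1 hn
  have hny : n ∈ y.1 := hy.1 hn
  have hnm : n ≤ m := hm (hAB hn)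
  have hum : u ≤ m := hm (hx.2 hu1)
  have hvm : v ≤ m := hm (hy.2 hv1)
  have hbn : ∀ a ∈ (principalCut n).1, a ≤ m := fun a ha => (Set.mem_Iic.mp ha).trans hnm
  have hbu : ∀ a ∈ (principalCut u).1, a ≤ m := fun a ha => (Set.mem_Iic.mp ha).trans hum
  have hbv : ∀ a ∈ (principalCut v).1, a ≤ m := fun a ha => (Set.mem_Iic.mp ha).trans hvm
  set p := supCut (principalCut n) (principalCut u) m hbn hbu with hpdef
  set q := supCut (principalCut n) (principalCut v) m hbn hbv with hqdef
  have hp := supCut_isLUB (principalCut n) (principalCut u) m hbn hbu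
  have hq := supCut_isLUB (principalCut n) (principalCut v) m hbn hbv
  have hup : principalCut u ≤ p := hp.1 (Set.mem_insert_of_mem _ rfl)
  have hvq : principalCut v ≤ q := hq.1 (Set.mem_insert_of_mem _ rfl)
  have hnp : principalCut n ≤ p := hp.1 (Set.mem_insert _ _)
  have hnq : principalCut n ≤ q := hq.1 (Set.mem_insert _ _)
  -- p ≤ x and q ≤ y
  have hpx : p ≤ x := by
    apply hp.2
    rintro z (rfl | hz)
    · exact (principal_le_iff x n).mpr hnx
    · rw [Set.mem_singleton_iff] at hz
      subst hz
      exact (principal_le_iff x u).mpr hu1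
  have hqy : q ≤ y := by
    apply hq.2
    rintro z (rfl | hz)
    · exact (principal_le_iff y n).mpr hny
    · rw [Set.mem_singleton_iff] at hz
      subst hz
      exact (principal_le_iff y v).mpr hv1
  -- p and q are incomparable
  have hpq : ¬ p ≤ q := by
    intro hle
    exact hu2 ((principal_le_iff y u).mp ((hup.trans hle).trans hqy))
  have hqp : ¬ q ≤ p := by
    intro hle
    exact hv2 ((principal_le_iff x v).mp ((hvq.trans hle).trans hpx))
  -- p ∈ M⁺
  have hpmem : p ∈ MPlus M := by
    by_cases hnu : n ≤ u
    · left; left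
      refine ⟨u, ?_⟩
      have : p = principalCut u := by
        apply le_antisymm _ hup
        apply hp.2
        rintro z (rfl | hz)
        · exact principal_mono hnu
        · rw [Set.mem_singleton_iff] at hz
          subst hz
          exact le_refl _
      exact this.symm
    · right
      have hun : ¬ u ≤ n := by
        intro hle
        exact hu2 (hy.1 (cut_lowerSet A hle hn))
      exact ⟨n, u, hnu, hun, hp⟩
  have hqmem : q ∈ MPlus M := by
    by_cases hnv : n ≤ v
    · left; left
      refine ⟨v, ?_⟩
      have : q = principalCut v := by
        apply le_antisymm _ hvq
        apply hq.2
        rintro z (rfl | hz)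
        · exact principal_mono hnv
        · rw [Set.mem_singleton_iff] at hz
          subst hz
          exact le_refl _
      exact this.symm
    · right
      have hvn : ¬ v ≤ n := by
        intro hle
        exact hv2 (hx.1 (cut_lowerSet A hle hn))
      exact ⟨n, v, hnv, hvn, hq⟩
  -- contradiction with the chain hypothesis
  have hpm : p ≤ principalCut m := by
    apply hp.2
    rintro z (rfl | hz)
    · exact principal_mono hnm
    · rw [Set.mem_singleton_iff] at hz
      subst hz
      exact principal_mono hum
  have hqm : q ≤ principalCut m := by
    apply hq.2
    rintro z (rfl | hz)
    · exact principal_mono hnm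
    · rw [Set.mem_singleton_iff] at hz
      subst hz
      exact principal_mono hvm
  have hchain := h n m hnm
  have hpq' : p ≠ q := fun hpq'' => hpq (le_of_eq hpq'')
  rcases hchain ⟨hpmem, hnp, hpm⟩ ⟨hqmem, hnq, hqm⟩ hpq' with hle | hle
  · exact hpq hle
  · exact hqp hle
end

section
/- Let M be a 2-level poset with X = Min(M) and Y = Max(M) both nonempty, and such that every element of Y lies above at least two elements of X. Then every cut of M is principal (equivalently, the canonical embedding of M into its Dedekind–MacNeille completion M^D is surjective) if and only if any two distinct elements of X have at most one common upper bound in Y, i.e. if and only if M is the incidence graph of a semilinear space whose points are the elements of X and whose lines are the sets {x ∈ X : x < y} for y ∈ Y. -/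
set_option autoImplicit false

/-- A 2-level poset with both levels nonempty, in which every maximal element
is above at least two minimal elements, is Dedekind–MacNeille complete (every cut is
principal) iff any two distinct minimal elements have at most one common upper bound among
the maximal elements, i.e. iff it is the incidence graph of a semilinear space. -/
theorem dm_complete_iff_semilinear (M : Type*) [PartialOrder M]
    (h2lev : IsTwoLevel M)
    (hmin : (minSet M).Nonempty) (hmax : (maxSet M).Nonempty)
    (hline : ∀ y ∈ maxSet M, ∃ x₁ x₂ : M, x₁ ∈ minSet M ∧ x₂ ∈ minSet M ∧ x₁ ≠ x₂ ∧
      x₁ < y ∧ x₂ < y) :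
    Function.Surjective (fun a : M => principalCut a) ↔
      (∀ x₁ x₂ : M, x₁ ∈ minSet M → x₂ ∈ minSet M → x₁ ≠ x₂ →
        ∀ y₁ y₂ : M, y₁ ∈ maxSet M → y₂ ∈ maxSet M →
          x₁ < y₁ → x₂ < y₁ → x₁ < y₂ → x₂ < y₂ → y₁ = y₂) := by
  constructor
  · intro hsurj x₁ x₂ hx₁ hx₂ hne y₁ y₂ hy₁ hy₂ h11 h21 h12 h22
    set S : Set M := {x₁, x₂} with hS
    have hx₁S : x₁ ∈ S := Or.inl rfl
    have hx₂S : x₂ ∈ S := Or.inr rfl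
    have hUS₁ : y₁ ∈ upperBounds S := by
      rintro z (rfl | rfl)
      · exact h11.le
      · exact h21.le
    have hUS₂ : y₂ ∈ upperBounds S := by
      rintro z (rfl | rfl)
      · exact h12.le
      · exact h22.le
    have hcut : IsCut (lowerBounds (upperBounds S)) := by
      refine ⟨⟨x₁, fun u hu => hu hx₁S⟩, ⟨y₁, fun z hz => hz hUS₁⟩, ?_⟩
      apply Set.Subset.antisymm
      · intro z hz u hu
        exact hz (fun w hw => hw hu)
      · exact subset_lowerBounds_upperBounds _
    obtain ⟨a, ha⟩ := hsurj ⟨_, hcut⟩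
    have hIa : Set.Iic a = lowerBounds (upperBounds S) := congrArg Subtype.val ha
    have hx₁a : x₁ ≤ a := by
      have : x₁ ∈ lowerBounds (upperBounds S) := fun u hu => hu hx₁S
      rw [← hIa] at this; exact this
    have hx₂a : x₂ ≤ a := by
      have : x₂ ∈ lowerBounds (upperBounds S) := fun u hu => hu hx₂S
      rw [← hIa] at this; exact this
    have hamax : IsMax a := by
      rcases h2lev a with hmin' | hmax'
      · exfalso
        have hax₁ : a = x₁ := le_antisymm (hmin' hx₁a) hx₁a
        have h' : x₂ ≤ x₁ := by rw [← hax₁]; exact hx₂a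
        exact hne (le_antisymm (hx₁ h') h')
      · exact hmax'
    have haLB : a ∈ lowerBounds (upperBounds S) := by
      rw [← hIa]; exact Set.mem_Iic.mpr le_rfl
    have hy₁a : y₁ = a := le_antisymm (hamax (haLB hUS₁)) (haLB hUS₁)
    have hy₂a : y₂ = a := le_antisymm (hamax (haLB hUS₂)) (haLB hUS₂)
    rw [hy₁a, hy₂a]
  · intro hsemi
    rintro ⟨J, hJne, hJub, hJeq⟩
    by_cases hY : ∃ y ∈ J, ¬ IsMin y
    · obtain ⟨y, hyJ, hymin⟩ := hY
      have hymax : IsMax y := (h2lev y).resolve_left hymin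
      have hub : upperBounds J = {y} := by
        obtain ⟨u, hu⟩ := hJub
        have key : ∀ v ∈ upperBounds J, v = y :=
          fun v hv => le_antisymm (hymax (hv hyJ)) (hv hyJ)
        apply Set.Subset.antisymm
        · intro v hv; exact key v hv
        · intro v hv
          rw [Set.mem_singleton_iff] at hv
          rw [hv, ← key u hu]; exact hu
      refine ⟨y, Subtype.ext ?_⟩
      show Set.Iic y = J
      rw [← hJeq, hub]
      ext z
      simp [lowerBounds, Set.Iic]
    · push_neg at hY
      by_cases htwo : ∃ x₁ ∈ J, ∃ x₂ ∈ J, x₁ ≠ x₂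
      · exfalso
        obtain ⟨x₁, hx₁J, x₂, hx₂J, hne⟩ := htwo
        have hx₁min : IsMin x₁ := hY x₁ hx₁J
        have hx₂min : IsMin x₂ := hY x₂ hx₂J
        have hfacts : ∀ u ∈ upperBounds J, IsMax u ∧ x₁ < u ∧ x₂ < u := by
          intro u hu
          have hx₁u : x₁ ≤ u := hu hx₁J
          have hx₂u : x₂ ≤ u := hu hx₂J
          have hune : x₁ ≠ u := by
            rintro rfl
            exact hne (le_antisymm (hx₂min (hx₁min hx₂u)) (hx₁min hx₂u)).symm
          have hlt₁ : x₁ < u := lt_of_le_of_ne hx₁u hune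
          have humax : IsMax u := by
            rcases h2lev u with humin | humax
            · exact absurd (le_antisymm (humin hx₁u) hx₁u) (Ne.symm hune)
            · exact humax
          have hune₂ : x₂ ≠ u := by
            rintro rfl
            exact hne (le_antisymm hx₁u (hx₂min hx₁u))
          exact ⟨humax, hlt₁, lt_of_le_of_ne hx₂u hune₂⟩
        obtain ⟨u, hu⟩ := hJub
        obtain ⟨humax, hlt₁, hlt₂⟩ := hfacts u hu
        have hub : upperBounds J = {u} := by
          apply Set.Subset.antisymm
          · intro v hv
            obtain ⟨hvmax, hvl₁, hvl₂⟩ := hfacts v hv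
            exact (hsemi x₁ x₂ hx₁min hx₂min hne v u hvmax humax hvl₁ hvl₂ hlt₁ hlt₂)
          · rintro v rfl; exact hu
        have huJ : u ∈ J := by
          rw [← hJeq, hub]
          intro v hv
          rw [Set.mem_singleton_iff] at hv
          rw [hv]
        exact (hY u huJ).not_lt hlt₁
      · push_neg at htwo
        obtain ⟨x₀, hx₀J⟩ := hJne
        have hx₀min : IsMin x₀ := hY x₀ hx₀J
        refine ⟨x₀, Subtype.ext ?_⟩
        show Set.Iic x₀ = J
        apply Set.Subset.antisymm
        · intro z hz
          have : z = x₀ := le_antisymm hz (hx₀min hz)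
          rw [this]; exact hx₀J
        · intro z hz
          have : z = x₀ := by
            by_contra h
            exact h (htwo z hz x₀ hx₀J)
          rw [this]; exact Set.mem_Iic.mpr le_rfl
end

section
/- Let M be a poset such that for all a ≤ b in M^D the interval [a,b]^{M^D} is a chain. Then an element p of M^D is the infimum in M^D of two incomparable elements of M if and only if p is the infimum in M^D of two incomparable elements of M^D; dually, p is the supremum in M^D of two incomparable elements of M if and only if p is the supremum in M^D of two incomparable elements of M^D. -/
set_option autoImplicit false

section Aux

variable {M : Type*} [PartialOrder M]

lemma ub_lb_ub_aux (X : Set M) :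
    upperBounds (lowerBounds (upperBounds X)) = upperBounds X := by
  apply Set.Subset.antisymm
  · exact upperBounds_mono_set (subset_lowerBounds_upperBounds X)
  · intro t ht d hd
    exact hd ht

lemma lb_ub_lb_aux (X : Set M) :
    lowerBounds (upperBounds (lowerBounds X)) = lowerBounds X := by
  apply Set.Subset.antisymm
  · exact lowerBounds_mono_set (subset_upperBounds_lowerBounds X)
  · exact subset_lowerBounds_upperBounds _

lemma isCut_closure (X : Set M) (hne : X.Nonempty) (hub : (upperBounds X).Nonempty) :
    IsCut (lowerBounds (upperBounds X)) :=
  ⟨hne.mono (subset_lowerBounds_upperBounds X),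
   by rw [ub_lb_ub_aux]; exact hub,
   by rw [ub_lb_ub_aux]⟩

lemma DMC.le_iff (u v : DMC M) : u ≤ v ↔ u.val ⊆ v.val := Iff.rfl

/-- If `t` is an upper bound of the cut `u`, then `u ≤ principalCut t`. -/
lemma cut_le_principal (u : DMC M) {t : M} (ht : t ∈ upperBounds u.val) :
    u ≤ principalCut t := by
  intro d hd
  rw [← u.2.2.2] at hd
  exact hd ht

/-- If `t ∈ u`, then `principalCut t ≤ u`. -/
lemma principal_le_cut (u : DMC M) {t : M} (ht : t ∈ u.val) :
    principalCut t ≤ u := by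
  intro d hd
  rw [← u.2.2.2] at ht ⊢
  exact fun s hs => le_trans (hd : d ≤ t) (ht hs)

lemma isCut_inter (u w : DMC M) (hne : (u.val ∩ w.val).Nonempty) :
    IsCut (u.val ∩ w.val) := by
  have hEq : u.val ∩ w.val = lowerBounds (upperBounds u.val ∪ upperBounds w.val) := by
    rw [lowerBounds_union, u.2.2.2, w.2.2.2]
  refine ⟨hne, ?_, ?_⟩
  · obtain ⟨t, ht⟩ := u.2.2.1
    exact ⟨t, fun d hd => ht hd.1⟩
  · rw [hEq, lb_ub_lb_aux]

end Aux

/-- If all intervals of `M^D` are chains, then the ramification points of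
`M` and of `M^D` coincide: `p` is an infimum (resp. supremum) of two incomparable elements
of `M` iff it is an infimum (resp. supremum) of two incomparable elements of `M^D`. -/
theorem ram_eq_ram_of_completion (M : Type*) [PartialOrder M]
    (h : ∀ a b : DMC M, a ≤ b → IsChain (· ≤ ·) (Set.Icc a b)) :
    ∀ p : DMC M,
      ((p ∈ upRam M) ↔ ∃ u v : DMC M, ¬ u ≤ v ∧ ¬ v ≤ u ∧ IsGLB {u, v} p) ∧
      ((p ∈ downRam M) ↔ ∃ u v : DMC M, ¬ u ≤ v ∧ ¬ v ≤ u ∧ IsLUB {u, v} p) := by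
  -- Any two elements of a common interval are comparable.
  have key : ∀ z w x y : DMC M, z ≤ x → z ≤ y → x ≤ w → y ≤ w → x ≤ y ∨ y ≤ x := by
    intro z w x y hzx hzy hxw hyw
    by_cases hxy : x = y
    · exact Or.inl (le_of_eq hxy)
    · exact h z w (hzx.trans hxw) ⟨hzx, hxw⟩ ⟨hzy, hyw⟩ hxy
  intro p
  constructor
  · constructor
    · rintro ⟨a, b, hab, hba, hglb⟩
      refine ⟨principalCut a, principalCut b, ?_, ?_, hglb⟩
      · exact fun hle => hab (hle (le_refl a))
      · exact fun hle => hba (hle (le_refl b))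
    · rintro ⟨u, v, huv, hvu, hglb⟩
      have hpu : p ≤ u := hglb.1 (Set.mem_insert _ _)
      have hpv : p ≤ v := hglb.1 (Set.mem_insert_of_mem _ rfl)
      obtain ⟨t, ht⟩ := u.2.2.1
      obtain ⟨t', ht'⟩ := v.2.2.1
      have hut : u ≤ principalCut t := cut_le_principal u ht
      have hvt' : v ≤ principalCut t' := cut_le_principal v ht'
      -- t and t' are incomparable
      have hcomp : ∀ s : DMC M, u ≤ s → v ≤ s → False := by
        intro s hus hvs
        rcases key p s u v hpu hpv hus hvs with hc | hc
        · exact huv hc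
        · exact hvu hc
      refine ⟨t, t', ?_, ?_, ?_, ?_⟩
      · intro htt'
        exact hcomp (principalCut t')
          (hut.trans (fun d (hd : d ≤ t) => hd.trans htt')) hvt'
      · intro ht't
        exact hcomp (principalCut t) hut
          (hvt'.trans (fun d (hd : d ≤ t') => hd.trans ht't))
      · rintro s (rfl | hs)
        · exact hpu.trans hut
        · rw [Set.mem_singleton_iff] at hs
          subst hs
          exact hpv.trans hvt'
      · intro w hw
        have hwt : w ≤ principalCut t := hw (Set.mem_insert _ _)
        have hwt' : w ≤ principalCut t' := hw (Set.mem_insert_of_mem _ rfl)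
        -- form the join w' of p and w inside Iic t
        have htub : t ∈ upperBounds (p.val ∪ w.val) := by
          rintro d (hd | hd)
          · exact hpu.trans hut hd
          · exact hwt hd
        have ht'ub : t' ∈ upperBounds (p.val ∪ w.val) := by
          rintro d (hd | hd)
          · exact hpv.trans hvt' hd
          · exact hwt' hd
        set w' : DMC M :=
          ⟨lowerBounds (upperBounds (p.val ∪ w.val)),
            isCut_closure _ (p.2.1.mono Set.subset_union_left) ⟨t, htub⟩⟩ with hw'def
        have hpw' : p ≤ w' :=
          Set.Subset.trans Set.subset_union_left (subset_lowerBounds_upperBounds _)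
        have hww' : w ≤ w' :=
          Set.Subset.trans Set.subset_union_right (subset_lowerBounds_upperBounds _)
        have hw't : w' ≤ principalCut t := fun d hd => hd htub
        have hw't' : w' ≤ principalCut t' := fun d hd => hd ht'ub
        have hw'u : w' ≤ u := by
          rcases key p (principalCut t) u w' hpu hpw' hut hw't with hc | hc
          · exact absurd hvt' (fun hvs => hcomp (principalCut t') (hc.trans hw't') hvs)
          · exact hc
        have hw'v : w' ≤ v := by
          rcases key p (principalCut t') v w' hpv hpw' hvt' hw't' with hc | hc
          · exact absurd hut (fun hus => hcomp (principalCut t) hus (hc.trans hw't))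
          · exact hc
        have : w' ≤ p := hglb.2 (by rintro s (rfl | hs)
                                    · exact hw'u
                                    · rw [Set.mem_singleton_iff] at hs; subst hs; exact hw'v)
        exact hww'.trans this
  · constructor
    · rintro ⟨a, b, hab, hba, hlub⟩
      refine ⟨principalCut a, principalCut b, ?_, ?_, hlub⟩
      · exact fun hle => hab (hle (le_refl a))
      · exact fun hle => hba (hle (le_refl b))
    · rintro ⟨u, v, huv, hvu, hlub⟩
      have hup : u ≤ p := hlub.1 (Set.mem_insert _ _)
      have hvp : v ≤ p := hlub.1 (Set.mem_insert_of_mem _ rfl)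
      obtain ⟨t, ht⟩ := u.2.1
      obtain ⟨t', ht'⟩ := v.2.1
      have htu : principalCut t ≤ u := principal_le_cut u ht
      have ht'v : principalCut t' ≤ v := principal_le_cut v ht'
      have hcomp : ∀ s : DMC M, s ≤ u → s ≤ v → False := by
        intro s hsu hsv
        rcases key s p u v hsu hsv hup hvp with hc | hc
        · exact huv hc
        · exact hvu hc
      refine ⟨t, t', ?_, ?_, ?_, ?_⟩
      · intro htt'
        exact hcomp (principalCut t) htu
          ((show principalCut t ≤ principalCut t' from
            fun d (hd : d ≤ t) => hd.trans htt').trans ht'v)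
      · intro ht't
        exact hcomp (principalCut t')
          ((show principalCut t' ≤ principalCut t from
            fun d (hd : d ≤ t') => hd.trans ht't).trans htu) ht'v
      · rintro s (rfl | hs)
        · exact htu.trans hup
        · rw [Set.mem_singleton_iff] at hs
          subst hs
          exact ht'v.trans hvp
      · intro w hw
        have htw : principalCut t ≤ w := hw (Set.mem_insert _ _)
        have ht'w : principalCut t' ≤ w := hw (Set.mem_insert_of_mem _ rfl)
        have htp : principalCut t ≤ p := htu.trans hup
        have ht'p : principalCut t' ≤ p := ht'v.trans hvp
        have hne : (p.val ∩ w.val).Nonempty :=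
          ⟨t, htp (le_refl t), htw (le_refl t)⟩
        set w' : DMC M := ⟨p.val ∩ w.val, isCut_inter p w hne⟩ with hw'def
        have hw'p : w' ≤ p := Set.inter_subset_left
        have hw'w : w' ≤ w := Set.inter_subset_right
        have htw' : principalCut t ≤ w' := fun d hd => ⟨htp hd, htw hd⟩
        have ht'w' : principalCut t' ≤ w' := fun d hd => ⟨ht'p hd, ht'w hd⟩
        have huw' : u ≤ w' := by
          rcases key (principalCut t) p w' u htw' htu hw'p hup with hc | hc
          · exact absurd ht'v (fun hvs => hcomp (principalCut t') (ht'w'.trans hc) hvs)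
          · exact hc
        have hvw' : v ≤ w' := by
          rcases key (principalCut t') p w' v ht'w' ht'v hw'p hvp with hc | hc
          · exact absurd htu (fun hus => hcomp (principalCut t) hus (htw'.trans hc))
          · exact hc
        have : p ≤ w' := hlub.2 (by rintro s (rfl | hs)
                                    · exact huw'
                                    · rw [Set.mem_singleton_iff] at hs; subst hs; exact hvw')
        exact this.trans hw'w
end

section
/- Let M be a countable connected 3-CS-homogeneous 2-level poset such that for some x ∈ Min(M) and y ∈ Max(M) with x < y the interval [x,y]^{M^D} is an infinite chain. Then either ↑Ram(M) = ↓Ram(M) or ↑Ram(M) ∩ ↓Ram(M) = ∅. -/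
set_option autoImplicit false

section Aux

variable {M : Type*} [PartialOrder M]

/-- An order automorphism of `M` induces an order automorphism of `DMC M`. -/
def cutIso (g : M ≃o M) : DMC M ≃o DMC M where
  toFun J := ⟨g '' J.val, J.prop.1.image g, by
      rw [g.upperBounds_image]; exact J.prop.2.1.image g, by
      rw [g.upperBounds_image, g.lowerBounds_image, J.prop.2.2]⟩
  invFun J := ⟨g.symm '' J.val, J.prop.1.image g.symm, by
      rw [g.symm.upperBounds_image]; exact J.prop.2.1.image g.symm, by
      rw [g.symm.upperBounds_image, g.symm.lowerBounds_image, J.prop.2.2]⟩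
  left_inv J := Subtype.ext (by simp)
  right_inv J := Subtype.ext (by simp)
  map_rel_iff' {a b} := by
    rw [Subtype.mk_le_mk]
    exact Set.image_subset_image_iff g.injective

lemma cutIso_principal (g : M ≃o M) (a : M) :
    cutIso g (principalCut a) = principalCut (g a) :=
  Subtype.ext (g.image_Iic a)

lemma cutIso_isGLB (g : M ≃o M) {a b : M} {p : DMC M}
    (h : IsGLB {principalCut a, principalCut b} p) :
    IsGLB {principalCut (g a), principalCut (g b)} (cutIso g p) := by
  have := (OrderIso.isGLB_image' (f := cutIso g)).mpr h
  rwa [Set.image_pair, cutIso_principal, cutIso_principal] at this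

lemma cutIso_isLUB (g : M ≃o M) {a b : M} {p : DMC M}
    (h : IsLUB {principalCut a, principalCut b} p) :
    IsLUB {principalCut (g a), principalCut (g b)} (cutIso g p) := by
  have := (OrderIso.isLUB_image' (f := cutIso g)).mpr h
  rwa [Set.image_pair, cutIso_principal, cutIso_principal] at this

lemma cutIso_mem_upRam (g : M ≃o M) {p : DMC M} (hp : p ∈ upRam M) :
    cutIso g p ∈ upRam M := by
  obtain ⟨a, b, h1, h2, h⟩ := hp
  exact ⟨g a, g b, fun hle => h1 (g.le_iff_le.mp hle),
    fun hle => h2 (g.le_iff_le.mp hle), cutIso_isGLB g h⟩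

lemma cutIso_mem_downRam (g : M ≃o M) {p : DMC M} (hp : p ∈ downRam M) :
    cutIso g p ∈ downRam M := by
  obtain ⟨a, b, h1, h2, h⟩ := hp
  exact ⟨g a, g b, fun hle => h1 (g.le_iff_le.mp hle),
    fun hle => h2 (g.le_iff_le.mp hle), cutIso_isLUB g h⟩

lemma conn3 {c a b : M} (h1 : (compGraph M).Adj c a) (h2 : (compGraph M).Adj c b) :
    ((compGraph M).induce ({c, a, b} : Set M)).Connected := by
  rw [SimpleGraph.connected_iff]
  have hc : c ∈ ({c, a, b} : Set M) := by simp
  have key : ∀ w : ({c, a, b} : Set M),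
      ((compGraph M).induce ({c, a, b} : Set M)).Reachable ⟨c, hc⟩ w := by
    rintro ⟨w, hw⟩
    simp only [Set.mem_insert_iff, Set.mem_singleton_iff] at hw
    rcases hw with rfl | rfl | rfl
    · exact SimpleGraph.Reachable.refl _
    · exact SimpleGraph.Adj.reachable h1
    · exact SimpleGraph.Adj.reachable h2
  exact ⟨fun u v => (key u).symm.trans (key v), ⟨⟨c, hc⟩⟩⟩

/-- Extending an isomorphism of V-shapes to an automorphism. -/
lemma v_extend (hhom : ThreeCSHomogeneous M) {c a b c' a' b' : M}
    (hca : c < a) (hcb : c < b) (hab1 : ¬ a ≤ b) (hab2 : ¬ b ≤ a)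
    (hca' : c' < a') (hcb' : c' < b') (hab1' : ¬ a' ≤ b') (hab2' : ¬ b' ≤ a') :
    ∃ g : M ≃o M, g c = c' ∧ g a = a' ∧ g b = b' := by
  classical
  have hab : a ≠ b := fun h => hab1 h.le
  have hba : b ≠ a := fun h => hab2 h.le
  have hab' : a' ≠ b' := fun h => hab1' h.le
  have hba' : b' ≠ a' := fun h => hab2' h.le
  have nac : ¬ a ≤ c := fun h => hab1 (h.trans hcb.le)
  have nbc : ¬ b ≤ c := fun h => hab2 (h.trans hca.le)
  have nac' : ¬ a' ≤ c' := fun h => hab1' (h.trans hcb'.le)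
  have nbc' : ¬ b' ≤ c' := fun h => hab2' (h.trans hca'.le)
  have hA3 : ({c, a, b} : Set M).ncard = 3 :=
    Set.ncard_eq_three.mpr ⟨c, a, b, hca.ne, hcb.ne, hab, rfl⟩
  have hB3 : ({c', a', b'} : Set M).ncard = 3 :=
    Set.ncard_eq_three.mpr ⟨c', a', b', hca'.ne, hcb'.ne, hab', rfl⟩
  have hAc : ((compGraph M).induce ({c, a, b} : Set M)).Connected :=
    conn3 (Or.inl hca) (Or.inl hcb)
  have hBc : ((compGraph M).induce ({c', a', b'} : Set M)).Connected :=
    conn3 (Or.inl hca') (Or.inl hcb')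
  obtain ⟨F, hFc, hFa, hFb⟩ :
      ∃ F : (({c, a, b} : Set M)) ≃o (({c', a', b'} : Set M)),
        (F ⟨c, by simp⟩ : M) = c' ∧ (F ⟨a, by simp⟩ : M) = a' ∧ (F ⟨b, by simp⟩ : M) = b' := by
    refine ⟨⟨⟨fun z => if z.val = c then ⟨c', by simp⟩ else
        if z.val = a then ⟨a', by simp⟩ else ⟨b', by simp⟩,
        fun z => if z.val = c' then ⟨c, by simp⟩ else
        if z.val = a' then ⟨a, by simp⟩ else ⟨b, by simp⟩, ?_, ?_⟩, ?_⟩, ?_, ?_, ?_⟩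
    · rintro ⟨z, hz⟩
      simp only [Set.mem_insert_iff, Set.mem_singleton_iff] at hz
      rcases hz with rfl | rfl | rfl <;>
        simp [hca.ne, hca.ne', hcb.ne, hcb.ne', hab, hba,
          hca'.ne, hca'.ne', hcb'.ne, hcb'.ne', hab', hba']
    · rintro ⟨z, hz⟩
      simp only [Set.mem_insert_iff, Set.mem_singleton_iff] at hz
      rcases hz with rfl | rfl | rfl <;>
        simp [hca.ne, hca.ne', hcb.ne, hcb.ne', hab, hba,
          hca'.ne, hca'.ne', hcb'.ne, hcb'.ne', hab', hba']
    · rintro ⟨z, hz⟩ ⟨w, hw⟩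
      simp only [Set.mem_insert_iff, Set.mem_singleton_iff] at hz hw
      rcases hz with rfl | rfl | rfl <;> rcases hw with rfl | rfl | rfl <;>
        simp [Subtype.mk_le_mk, hca.ne, hca.ne', hcb.ne, hcb.ne', hab, hba,
          hca'.ne, hca'.ne', hcb'.ne, hcb'.ne', hab', hba',
          hca.le, hcb.le, hca'.le, hcb'.le, hab1, hab2, hab1', hab2',
          nac, nbc, nac', nbc']
    · simp
    · simp [hca.ne']
    · simp [hcb.ne', hba]
  obtain ⟨g, hg⟩ := hhom _ _ hA3 hB3 hAc hBc F
  exact ⟨g, by rw [hg ⟨c, by simp⟩, hFc], by rw [hg ⟨a, by simp⟩, hFa],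
    by rw [hg ⟨b, by simp⟩, hFb]⟩

/-- Extending an isomorphism of Λ-shapes to an automorphism. -/
lemma lam_extend (hhom : ThreeCSHomogeneous M) {u a b u' a' b' : M}
    (hau : a < u) (hbu : b < u) (hab1 : ¬ a ≤ b) (hab2 : ¬ b ≤ a)
    (hau' : a' < u') (hbu' : b' < u') (hab1' : ¬ a' ≤ b') (hab2' : ¬ b' ≤ a') :
    ∃ g : M ≃o M, g u = u' ∧ g a = a' ∧ g b = b' := by
  classical
  have hab : a ≠ b := fun h => hab1 h.le
  have hba : b ≠ a := fun h => hab2 h.le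
  have hab' : a' ≠ b' := fun h => hab1' h.le
  have hba' : b' ≠ a' := fun h => hab2' h.le
  have nua : ¬ u ≤ a := fun h => hab2 (hbu.le.trans h)
  have nub : ¬ u ≤ b := fun h => hab1 (hau.le.trans h)
  have nua' : ¬ u' ≤ a' := fun h => hab2' (hbu'.le.trans h)
  have nub' : ¬ u' ≤ b' := fun h => hab1' (hau'.le.trans h)
  have hA3 : ({u, a, b} : Set M).ncard = 3 :=
    Set.ncard_eq_three.mpr ⟨u, a, b, hau.ne', hbu.ne', hab, rfl⟩
  have hB3 : ({u', a', b'} : Set M).ncard = 3 :=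
    Set.ncard_eq_three.mpr ⟨u', a', b', hau'.ne', hbu'.ne', hab', rfl⟩
  have hAc : ((compGraph M).induce ({u, a, b} : Set M)).Connected :=
    conn3 (Or.inr hau) (Or.inr hbu)
  have hBc : ((compGraph M).induce ({u', a', b'} : Set M)).Connected :=
    conn3 (Or.inr hau') (Or.inr hbu')
  obtain ⟨F, hFu, hFa, hFb⟩ :
      ∃ F : (({u, a, b} : Set M)) ≃o (({u', a', b'} : Set M)),
        (F ⟨u, by simp⟩ : M) = u' ∧ (F ⟨a, by simp⟩ : M) = a' ∧ (F ⟨b, by simp⟩ : M) = b' := by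
    refine ⟨⟨⟨fun z => if z.val = u then ⟨u', by simp⟩ else
        if z.val = a then ⟨a', by simp⟩ else ⟨b', by simp⟩,
        fun z => if z.val = u' then ⟨u, by simp⟩ else
        if z.val = a' then ⟨a, by simp⟩ else ⟨b, by simp⟩, ?_, ?_⟩, ?_⟩, ?_, ?_, ?_⟩
    · rintro ⟨z, hz⟩
      simp only [Set.mem_insert_iff, Set.mem_singleton_iff] at hz
      rcases hz with rfl | rfl | rfl <;>
        simp [hau.ne, hau.ne', hbu.ne, hbu.ne', hab, hba,
          hau'.ne, hau'.ne', hbu'.ne, hbu'.ne', hab', hba']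
    · rintro ⟨z, hz⟩
      simp only [Set.mem_insert_iff, Set.mem_singleton_iff] at hz
      rcases hz with rfl | rfl | rfl <;>
        simp [hau.ne, hau.ne', hbu.ne, hbu.ne', hab, hba,
          hau'.ne, hau'.ne', hbu'.ne, hbu'.ne', hab', hba']
    · rintro ⟨z, hz⟩ ⟨w, hw⟩
      simp only [Set.mem_insert_iff, Set.mem_singleton_iff] at hz hw
      rcases hz with rfl | rfl | rfl <;> rcases hw with rfl | rfl | rfl <;>
        simp [Subtype.mk_le_mk, hau.ne, hau.ne', hbu.ne, hbu.ne', hab, hba,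
          hau'.ne, hau'.ne', hbu'.ne, hbu'.ne', hab', hba',
          hau.le, hbu.le, hau'.le, hbu'.le, hab1, hab2, hab1', hab2',
          nua, nub, nua', nub']
    · simp
    · simp [hau.ne]
    · simp [hbu.ne, hba]
  obtain ⟨g, hg⟩ := hhom _ _ hA3 hB3 hAc hBc F
  exact ⟨g, by rw [hg ⟨u, by simp⟩, hFu], by rw [hg ⟨a, by simp⟩, hFa],
    by rw [hg ⟨b, by simp⟩, hFb]⟩

end Aux

/-- In a countable connected 3-CS-homogeneous 2-level poset whose
completion-interval is an infinite chain, the sets of upward and downward ramification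
points are either equal or disjoint. -/
theorem upRam_eq_or_disjoint_downRam (M : Type*) [PartialOrder M] [Countable M]
    (h2lev : IsTwoLevel M)
    (hconn : (compGraph M).Connected)
    (hhom : ThreeCSHomogeneous M)
    (x y : M) (hx : x ∈ minSet M) (hy : y ∈ maxSet M) (hxy : x < y)
    (hinf : (Set.Icc (principalCut x) (principalCut y)).Infinite)
    (hchain : IsChain (· ≤ ·) (Set.Icc (principalCut x) (principalCut y))) :
    upRam M = downRam M ∨ upRam M ∩ downRam M = ∅ := by
  by_cases hne : upRam M ∩ downRam M = ∅
  · exact Or.inr hne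
  left
  obtain ⟨p, hpu, hpd⟩ : (upRam M ∩ downRam M).Nonempty :=
    Set.nonempty_iff_ne_empty.mpr hne
  ext q
  constructor
  · -- q ∈ upRam → q ∈ downRam
    rintro ⟨a', b', hab1', hab2', hq⟩
    obtain ⟨a, b, hab1, hab2, hp⟩ := hpu
    -- common lower bound for a', b'
    obtain ⟨m', hm'⟩ := q.prop.1
    have hqa' : q.val ⊆ Set.Iic a' := hq.1 (Set.mem_insert _ _)
    have hqb' : q.val ⊆ Set.Iic b' := hq.1 (Set.mem_insert_iff.mpr (Or.inr rfl))
    have hma' : m' < a' :=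
      lt_of_le_of_ne (hqa' hm') (fun h => hab1' (h ▸ (hqb' hm' : m' ≤ b')))
    have hmb' : m' < b' :=
      lt_of_le_of_ne (hqb' hm') (fun h => hab2' (h ▸ (hqa' hm' : m' ≤ a')))
    -- common lower bound for a, b
    obtain ⟨m, hm⟩ := p.prop.1
    have hqa : p.val ⊆ Set.Iic a := hp.1 (Set.mem_insert _ _)
    have hqb : p.val ⊆ Set.Iic b := hp.1 (Set.mem_insert_iff.mpr (Or.inr rfl))
    have hma : m < a :=
      lt_of_le_of_ne (hqa hm) (fun h => hab1 (h ▸ (hqb hm : m ≤ b)))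
    have hmb : m < b :=
      lt_of_le_of_ne (hqb hm) (fun h => hab2 (h ▸ (hqa hm : m ≤ a)))
    obtain ⟨g, _, hga, hgb⟩ :=
      v_extend hhom hma hmb hab1 hab2 hma' hmb' hab1' hab2'
    have hGLB : IsGLB {principalCut a', principalCut b'} (cutIso g p) := by
      have := cutIso_isGLB g hp
      rwa [hga, hgb] at this
    have : q = cutIso g p := hq.unique hGLB
    rw [this]
    exact cutIso_mem_downRam g hpd
  · -- q ∈ downRam → q ∈ upRam
    rintro ⟨c', d', hcd1', hcd2', hq⟩
    obtain ⟨c, d, hcd1, hcd2, hp⟩ := hpd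
    -- common upper bound for c', d'
    obtain ⟨u', hu'⟩ := q.prop.2.1
    have hc'q : Set.Iic c' ⊆ q.val := hq.1 (Set.mem_insert _ _)
    have hd'q : Set.Iic d' ⊆ q.val := hq.1 (Set.mem_insert_iff.mpr (Or.inr rfl))
    have hc'm : c' ∈ q.val := hc'q le_rfl
    have hd'm : d' ∈ q.val := hd'q le_rfl
    have hcu' : c' < u' :=
      lt_of_le_of_ne (hu' hc'm) (fun h => hcd2' (h ▸ (hu' hd'm : d' ≤ u')))
    have hdu' : d' < u' :=
      lt_of_le_of_ne (hu' hd'm) (fun h => hcd1' (h ▸ (hu' hc'm : c' ≤ u')))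
    -- common upper bound for c, d
    obtain ⟨u, hu⟩ := p.prop.2.1
    have hcq : Set.Iic c ⊆ p.val := hp.1 (Set.mem_insert _ _)
    have hdq : Set.Iic d ⊆ p.val := hp.1 (Set.mem_insert_iff.mpr (Or.inr rfl))
    have hcm : c ∈ p.val := hcq le_rfl
    have hdm : d ∈ p.val := hdq le_rfl
    have hcu : c < u :=
      lt_of_le_of_ne (hu hcm) (fun h => hcd2 (h ▸ (hu hdm : d ≤ u)))
    have hdu : d < u :=
      lt_of_le_of_ne (hu hdm) (fun h => hcd1 (h ▸ (hu hcm : c ≤ u)))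
    obtain ⟨g, _, hgc, hgd⟩ :=
      lam_extend hhom hcu hdu hcd1 hcd2 hcu' hdu' hcd1' hcd2'
    have hLUB : IsLUB {principalCut c', principalCut d'} (cutIso g p) := by
      have := cutIso_isLUB g hp
      rwa [hgc, hgd] at this
    have : q = cutIso g p := hq.unique hLUB
    rw [this]
    exact cutIso_mem_upRam g hpu
end
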